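/- Let n ≥ 2 be an integer, let ν ≥ 2 be a real number, and define v(θ) = sin²θ · F_n^ν(cos θ) for θ ∈ (0, π/2). If 0 < θ₁ < θ₂ < π/2 are both local maximum points of the function θ ↦ |v(θ)| on (0, π/2), then |v(θ₁)| > |v(θ₂)|; that is, the successive relative maxima of |v| form an increasing sequence as θ decreases from π/2 to 0. -/

import Mathlib

open Real MeasureTheory intervalIntegral Set

noncomputable section

/-- The Gegenbauer polynomial `C_k^ν` via the Rodrigues formula. -/
def gegenbauerC (ν : ℝ) (k : ℕ) (x : ℝ) : ℝ :=
  ((-1 : ℝ) ^ k / (2 ^ k * (Nat.factorial k : ℝ))) *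
    (Real.Gamma (ν + 1 / 2) * Real.Gamma ((k : ℝ) + 2 * ν) /
      (Real.Gamma (2 * ν) * Real.Gamma (ν + (k : ℝ) + 1 / 2))) *
    (1 - x ^ 2) ^ ((1 : ℝ) / 2 - ν) *
    iteratedDeriv k (fun y : ℝ => (1 - y ^ 2) ^ ((k : ℝ) + ν - 1 / 2)) x

/-- The normalization `F_k^ν` of `C_k^ν` with `F_k^ν(1) = 1`. -/
def gegenbauerF (ν : ℝ) (k : ℕ) (x : ℝ) : ℝ :=
  ((Nat.factorial k : ℝ) * Real.Gamma (2 * ν) / Real.Gamma ((k : ℝ) + 2 * ν)) * gegenbauerC ν k x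

/-- `λ_k = k (k+5)`. -/
def lamb (k : ℕ) : ℝ := k * (k + 5)

/-- `F̃_k'(x) = (720/(λ_k(λ_k+4)(λ_k+6))) C_{k-1}^{7/2}(x)`, the derivative of `F_k^{5/2}`
rescaled so that `F̃_k'(1) = 1`. -/
def tildeFd (k : ℕ) (x : ℝ) : ℝ :=
  (720 / (lamb k * (lamb k + 4) * (lamb k + 6))) * gegenbauerC (7 / 2) (k - 1) x

/-! ### Auxiliary material for the proof -/

/-- The Rodrigues polynomials: `(d/dx)^j (1-x²)^α = (1-x²)^(α-j) ⬝ Pg α j` on `(-1,1)`. -/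
def Pg (α : ℝ) : ℕ → Polynomial ℝ
  | 0 => 1
  | j+1 => (1 - Polynomial.X^2) * (Pg α j).derivative
      - Polynomial.C (2*(α - j)) * Polynomial.X * Pg α j

lemma Pg_rep (α : ℝ) (j : ℕ) {x : ℝ} (hx : x ∈ Ioo (-1:ℝ) 1) :
    iteratedDeriv j (fun y : ℝ => (1 - y^2) ^ α) x
      = (1 - x^2) ^ (α - j) * (Pg α j).eval x := by
  induction j generalizing x with
  | zero => simp [Pg]
  | succ j ih =>
    have hpos : ∀ {y : ℝ}, y ∈ Ioo (-1:ℝ) 1 → (0:ℝ) < 1 - y^2 := by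
      intro y hy
      nlinarith [hy.1, hy.2]
    rw [iteratedDeriv_succ]
    have hev : (fun y => iteratedDeriv j (fun y : ℝ => (1 - y^2) ^ α) y)
        =ᶠ[nhds x] fun y => (1 - y^2) ^ (α - j) * (Pg α j).eval y := by
      filter_upwards [isOpen_Ioo.mem_nhds hx] with y hy
      exact ih hy
    rw [hev.deriv_eq]
    have h1 : HasDerivAt (fun y : ℝ => 1 - y^2) (-(2*x)) x := by
      simpa using ((hasDerivAt_pow 2 x).const_sub 1)
    have h2 : HasDerivAt (fun y : ℝ => (1 - y^2) ^ (α - j))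
        (-(2*x) * (α - j) * (1 - x^2) ^ (α - j - 1)) x :=
      HasDerivAt.rpow_const h1 (Or.inl (hpos hx).ne')
    have h3 : HasDerivAt (fun y : ℝ => (Pg α j).eval y) ((Pg α j).derivative.eval x) x :=
      (Pg α j).hasDerivAt x
    have h4 := h2.fun_mul h3
    rw [h4.deriv]
    have hx2 : (0:ℝ) < 1 - x^2 := hpos hx
    have hc : α - ((j+1:ℕ):ℝ) = α - (j:ℝ) - 1 := by push_cast; ring
    have hsplit : (1 - x^2) ^ (α - (j:ℝ)) = (1 - x^2) ^ (α - (j:ℝ) - 1) * (1 - x^2) := by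
      rw [← Real.rpow_add_one hx2.ne' (α - (j:ℝ) - 1)]; ring_nf
    rw [hc, hsplit]
    simp only [Pg, Polynomial.eval_sub, Polynomial.eval_mul, Polynomial.eval_one,
      Polynomial.eval_pow, Polynomial.eval_X, Polynomial.eval_C]
    ring

lemma Pg_ode (α : ℝ) (j : ℕ) :
    (1 - Polynomial.X^2) * Polynomial.derivative (Polynomial.derivative (Pg α j))
      = Polynomial.C (2*(α - j + 1)) * Polynomial.X * Polynomial.derivative (Pg α j)
        - Polynomial.C (((j:ℝ)+1)*(2*α - j) - 2*(α - j)) * Pg α j := by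
  induction j with
  | zero => simp [Pg]
  | succ j ih =>
    have ih' := congrArg Polynomial.derivative ih
    simp only [Polynomial.derivative_mul, Polynomial.derivative_sub, Polynomial.derivative_one,
      Polynomial.derivative_pow, Polynomial.derivative_X,
      Polynomial.derivative_C, Pg, Polynomial.derivative_neg, Polynomial.derivative_ofNat,
      Polynomial.derivative_add, zero_mul, mul_zero, zero_add, add_zero, zero_sub, sub_zero,
      mul_one, one_mul] at ih' ⊢
    push_cast at ih' ih ⊢
    simp only [map_sub, map_add, map_mul, map_one, map_ofNat] at ih' ih ⊢
    linear_combination (1 - Polynomial.X^2) * ih'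
      - ((2:Polynomial ℝ)*(Polynomial.C α - Polynomial.C (j:ℝ)) * Polynomial.X) * ih

lemma Pg_eval_one (α : ℝ) (j : ℕ) :
    (Pg α j).eval 1 = ∏ i ∈ Finset.range j, (-2*(α - i)) := by
  induction j with
  | zero => simp [Pg]
  | succ j ih => rw [Finset.prod_range_succ, ← ih]; simp [Pg]; ring

lemma hasDerivAt_Vf (p : Polynomial ℝ) (θ : ℝ) :
    HasDerivAt (fun t => Real.sin t ^ 2 * p.eval (Real.cos t))
      (2*Real.sin θ*Real.cos θ*p.eval (Real.cos θ)
        - Real.sin θ^3 * p.derivative.eval (Real.cos θ)) θ := by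
  have hs2 : HasDerivAt (fun t : ℝ => Real.sin t ^ 2) (2*Real.sin θ*Real.cos θ) θ := by
    simpa [mul_comm, mul_assoc, mul_left_comm] using ((Real.hasDerivAt_sin θ).fun_pow 2)
  have he : HasDerivAt (fun t : ℝ => p.eval (Real.cos t))
      (p.derivative.eval (Real.cos θ) * (-Real.sin θ)) θ :=
    (p.hasDerivAt (Real.cos θ)).comp θ (Real.hasDerivAt_cos θ)
  have := hs2.fun_mul he
  refine this.congr_deriv ?_
  ring

lemma hasDerivAt_Vd (p : Polynomial ℝ) (θ : ℝ) :
    HasDerivAt (fun t => 2*Real.sin t*Real.cos t*p.eval (Real.cos t)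
        - Real.sin t^3 * p.derivative.eval (Real.cos t))
      ((2*Real.cos θ^2 - 2*Real.sin θ^2) * p.eval (Real.cos θ)
        - 5*Real.sin θ^2*Real.cos θ * p.derivative.eval (Real.cos θ)
        + Real.sin θ^4 * (Polynomial.derivative (Polynomial.derivative p)).eval (Real.cos θ)) θ := by
  have hsin := Real.hasDerivAt_sin θ
  have hcos := Real.hasDerivAt_cos θ
  have he : HasDerivAt (fun t : ℝ => p.eval (Real.cos t))
      (p.derivative.eval (Real.cos θ) * (-Real.sin θ)) θ :=
    (p.hasDerivAt (Real.cos θ)).comp θ hcos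
  have he' : HasDerivAt (fun t : ℝ => p.derivative.eval (Real.cos t))
      ((Polynomial.derivative (Polynomial.derivative p)).eval (Real.cos θ) * (-Real.sin θ)) θ :=
    (p.derivative.hasDerivAt (Real.cos θ)).comp θ hcos
  have hs3 : HasDerivAt (fun t : ℝ => Real.sin t ^ 3) (3*Real.sin θ^2*Real.cos θ) θ := by
    simpa [mul_comm, mul_assoc, mul_left_comm] using (hsin.fun_pow 3)
  have h1 : HasDerivAt (fun t : ℝ => 2*Real.sin t*Real.cos t)
      (2*Real.cos θ*Real.cos θ + 2*Real.sin θ*(-Real.sin θ)) θ := by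
    simpa [mul_assoc] using ((hsin.const_mul 2).fun_mul hcos)
  have := (h1.fun_mul he).fun_sub (hs3.fun_mul he')
  refine this.congr_deriv ?_
  ring

set_option maxHeartbeats 4000000 in
/-- for `v(θ) = sin²θ · F_n^ν(cos θ)` with `n ≥ 2`, `ν ≥ 2`, the successive
relative maxima of `|v|` on `(0, π/2)` increase as `θ` decreases. -/
theorem increasing_local_maxima (n : ℕ) (ν : ℝ) (hn : 2 ≤ n) (hν : 2 ≤ ν)
    (θ₁ θ₂ : ℝ) (h₁ : θ₁ ∈ Set.Ioo 0 (Real.pi / 2)) (h₂ : θ₂ ∈ Set.Ioo 0 (Real.pi / 2))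
    (hlt : θ₁ < θ₂)
    (hmax₁ : IsLocalMax (fun θ : ℝ => |Real.sin θ ^ 2 * gegenbauerF ν n (Real.cos θ)|) θ₁)
    (hmax₂ : IsLocalMax (fun θ : ℝ => |Real.sin θ ^ 2 * gegenbauerF ν n (Real.cos θ)|) θ₂) :
    |Real.sin θ₂ ^ 2 * gegenbauerF ν n (Real.cos θ₂)| <
      |Real.sin θ₁ ^ 2 * gegenbauerF ν n (Real.cos θ₁)| := by
  obtain ⟨hθ₁0, hθ₁π⟩ := h₁
  obtain ⟨hθ₂0, hθ₂π⟩ := h₂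
  have hπ := Real.pi_pos
  have hν0 : (0:ℝ) < ν := by linarith
  set α : ℝ := (n:ℝ) + ν - 1/2 with hα
  set P : Polynomial ℝ := Pg α n with hPdef
  set V : ℝ → ℝ := fun t => Real.sin t^2 * P.eval (Real.cos t) with hVdef
  set Vd : ℝ → ℝ := fun t => 2*Real.sin t*Real.cos t*P.eval (Real.cos t)
      - Real.sin t^3*(Polynomial.derivative P).eval (Real.cos t) with hVddef
  set Vdd : ℝ → ℝ := fun t => (2*Real.cos t^2 - 2*Real.sin t^2)*P.eval (Real.cos t)
      - 5*Real.sin t^2*Real.cos t*(Polynomial.derivative P).eval (Real.cos t)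
      + Real.sin t^4*(Polynomial.derivative (Polynomial.derivative P)).eval (Real.cos t) with hVdddef
  set K : ℝ := ((Nat.factorial n : ℝ) * Real.Gamma (2*ν) / Real.Gamma ((n:ℝ) + 2*ν)) *
      (((-1:ℝ)^n / (2^n * (Nat.factorial n : ℝ))) *
        (Real.Gamma (ν + 1/2) * Real.Gamma ((n:ℝ) + 2*ν) /
          (Real.Gamma (2*ν) * Real.Gamma (ν + (n:ℝ) + 1/2)))) with hK
  -- positivity helpers
  have hsinpos : ∀ t ∈ Ioo (0:ℝ) (π/2), 0 < Real.sin t := fun t ht =>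
    Real.sin_pos_of_pos_of_lt_pi ht.1 (by linarith [ht.2])
  have hcospos : ∀ t ∈ Ioo (0:ℝ) (π/2), 0 < Real.cos t := fun t ht =>
    Real.cos_pos_of_mem_Ioo ⟨by linarith [ht.1], ht.2⟩
  have hcosmem : ∀ t ∈ Ioo (0:ℝ) (π/2), Real.cos t ∈ Ioo (-1:ℝ) 1 := by
    intro t ht
    refine ⟨by linarith [hcospos t ht], ?_⟩
    refine lt_of_le_of_ne (Real.cos_le_one t) ?_
    intro hc
    have := (Real.cos_eq_one_iff_of_lt_of_lt (x := t) (by linarith [ht.1, ht.2])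
      (by linarith [ht.2])).mp hc
    linarith [ht.1]
  have hKne : K ≠ 0 := by
    have g1 : 0 < Real.Gamma (2*ν) := Real.Gamma_pos_of_pos (by linarith)
    have hn0 : (0:ℝ) ≤ n := Nat.cast_nonneg n
    have g2 : 0 < Real.Gamma ((n:ℝ) + 2*ν) := Real.Gamma_pos_of_pos (by linarith)
    have g3 : 0 < Real.Gamma (ν + 1/2) := Real.Gamma_pos_of_pos (by linarith)
    have g4 : 0 < Real.Gamma (ν + (n:ℝ) + 1/2) := Real.Gamma_pos_of_pos (by linarith)
    have f1 : (0:ℝ) < (Nat.factorial n : ℝ) := by exact_mod_cast Nat.factorial_pos n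
    have m1 : ((-1:ℝ)^n) ≠ 0 := pow_ne_zero n (by norm_num)
    rw [hK]
    apply mul_ne_zero
    · positivity
    · apply mul_ne_zero
      · apply div_ne_zero m1 (by positivity)
      · positivity
  -- connection to the polynomial
  have hconn : ∀ t ∈ Ioo (0:ℝ) (π/2),
      Real.sin t^2 * gegenbauerF ν n (Real.cos t) = K * V t := by
    intro t ht
    have hmem := hcosmem t ht
    have hpos : (0:ℝ) < 1 - Real.cos t^2 := by nlinarith [hmem.1, hmem.2]
    unfold gegenbauerF gegenbauerC
    rw [← hα, Pg_rep α n hmem]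
    have hαn : α - (n:ℝ) = ν - 1/2 := by rw [hα]; ring
    rw [hαn, ← hPdef]
    have hcollapse : (1 - Real.cos t^2) ^ ((1:ℝ)/2 - ν) * (1 - Real.cos t^2) ^ (ν - 1/2) = 1 := by
      rw [← Real.rpow_add hpos]
      norm_num
    rw [hK]
    simp only [hVdef]
    linear_combination (Real.sin t^2 * ((Nat.factorial n : ℝ) * Real.Gamma (2*ν) / Real.Gamma ((n:ℝ) + 2*ν) *
      (((-1:ℝ))^n / (2^n * (Nat.factorial n : ℝ)) *
        (Real.Gamma (ν + 1/2) * Real.Gamma ((n:ℝ) + 2*ν) / (Real.Gamma (2*ν) * Real.Gamma (ν + (n:ℝ) + 1/2))))) *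
      Polynomial.eval (Real.cos t) P) * hcollapse
    -- derivatives of V
  have hV' : ∀ t : ℝ, HasDerivAt V (Vd t) t := fun t => hasDerivAt_Vf P t
  have hVd' : ∀ t : ℝ, HasDerivAt Vd (Vdd t) t := fun t => hasDerivAt_Vd P t
  have hVcont : Continuous V := by
    rw [continuous_iff_continuousAt]; exact fun t => (hV' t).continuousAt
  -- the polynomial is nonzero
  have hPne : P ≠ 0 := by
    intro h0
    have h1 : P.eval 1 ≠ 0 := by
      rw [hPdef, Pg_eval_one]
      apply Finset.prod_ne_zero_iff.mpr
      intro i hi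
      have hi' : (i:ℝ) ≤ (n:ℝ) - 1 := by
        have := Finset.mem_range.mp hi
        have : (i:ℝ) + 1 ≤ (n:ℝ) := by exact_mod_cast this
        linarith
      have : 0 < α - (i:ℝ) := by rw [hα]; linarith
      intro hc
      nlinarith
    exact h1 (by rw [h0]; simp)
  -- V cannot vanish identically on a subinterval
  have hnotzero : ∀ a b : ℝ, 0 ≤ a → a < b → b ≤ π/2 → (∀ t ∈ Ioo a b, V t = 0) → False := by
    intro a b ha hab hb hz
    have hsub : Ioo a b ⊆ Icc 0 π := by
      intro t ht
      exact ⟨by linarith [ht.1], by linarith [ht.2]⟩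
    have hinj : InjOn Real.cos (Ioo a b) := Real.injOn_cos.mono hsub
    have himg : (Real.cos '' (Ioo a b)).Infinite :=
      Set.Infinite.image hinj (Set.Ioo_infinite hab)
    have hroots : (Real.cos '' (Ioo a b)) ⊆ {x | P.IsRoot x} := by
      rintro x ⟨t, ht, rfl⟩
      have hsin : 0 < Real.sin t :=
        Real.sin_pos_of_pos_of_lt_pi (by linarith [ht.1]) (by linarith [ht.2])
      have := hz t ht
      rw [hVdef] at this
      simp only at this
      have h2 : Real.sin t ^ 2 ≠ 0 := by positivity
      simp only [Set.mem_setOf_eq, Polynomial.IsRoot]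
      rcases mul_eq_zero.mp this with h | h
      · exact absurd h h2
      · exact h
    exact hPne (Polynomial.eq_zero_of_infinite_isRoot P (himg.mono hroots))
  -- transfer local maxima to |V|
  have habs : ∀ t ∈ Ioo (0:ℝ) (π/2),
      |Real.sin t^2 * gegenbauerF ν n (Real.cos t)| = |K| * |V t| := by
    intro t ht
    rw [hconn t ht, abs_mul]
  have hlmV : ∀ θ ∈ Ioo (0:ℝ) (π/2),
      IsLocalMax (fun t : ℝ => |Real.sin t ^ 2 * gegenbauerF ν n (Real.cos t)|) θ →
      IsLocalMax (fun t => |V t|) θ := by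
    intro θ hθ hm
    have hev : (fun t : ℝ => |Real.sin t ^ 2 * gegenbauerF ν n (Real.cos t)|)
        =ᶠ[nhds θ] fun t => |K| * |V t| := by
      filter_upwards [isOpen_Ioo.mem_nhds hθ] with t ht
      exact habs t ht
    have hm2 : IsLocalMax (fun t => |K| * |V t|) θ := hm.congr hev
    have hKpos : 0 < |K| := abs_pos.mpr hKne
    filter_upwards [hm2] with t ht
    exact le_of_mul_le_mul_left ht hKpos
  -- at a local max of |V| in the open interval: V ≠ 0 and V' = 0
  have key : ∀ θ ∈ Ioo (0:ℝ) (π/2), IsLocalMax (fun t => |V t|) θ →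
      V θ ≠ 0 ∧ Vd θ = 0 := by
    intro θ hθ hm
    have hVne : V θ ≠ 0 := by
      intro h0
      have hev : ∀ᶠ t in nhds θ, V t = 0 := by
        filter_upwards [hm] with t ht
        have : |V t| ≤ 0 := by rw [h0] at ht; simpa using ht
        exact abs_eq_zero.mp (le_antisymm this (abs_nonneg _))
      obtain ⟨δ, hδ0, hδ⟩ := Metric.eventually_nhds_iff.mp hev
      have hab : max (θ - δ/2) 0 < min (θ + δ/2) (π/2) := by
        apply max_lt <;> apply lt_min <;> [skip; skip; skip; skip] <;> first
          | linarith [hθ.1, hθ.2, hδ0]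
      refine hnotzero (max (θ - δ/2) 0) (min (θ + δ/2) (π/2)) (le_max_right _ _) hab
        (min_le_right _ _) ?_
      intro t ht
      apply hδ
      have h1 : θ - δ/2 ≤ max (θ - δ/2) 0 := le_max_left _ _
      have h2 : min (θ + δ/2) (π/2) ≤ θ + δ/2 := min_le_left _ _
      rw [Real.dist_eq, abs_sub_lt_iff]
      constructor <;> [linarith [ht.1, ht.2]; linarith [ht.1, ht.2]]
    refine ⟨hVne, ?_⟩
    rcases hVne.lt_or_gt with hneg | hpos
    · have hev : ∀ᶠ t in nhds θ, V t < 0 :=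
        hVcont.continuousAt.eventually_mem (Iio_mem_nhds hneg)
      have heq : (fun t => |V t|) =ᶠ[nhds θ] fun t => -V t := by
        filter_upwards [hev] with t ht
        exact abs_of_neg ht
      have hm2 : IsLocalMax (fun t => -V t) θ := hm.congr heq
      have hm3 : IsLocalMin V θ := by
        have := hm2.neg
        simpa using this
      exact hm3.hasDerivAt_eq_zero (hV' θ)
    · have hev : ∀ᶠ t in nhds θ, 0 < V t :=
        hVcont.continuousAt.eventually_mem (Ioi_mem_nhds hpos)
      have heq : (fun t => |V t|) =ᶠ[nhds θ] V := by
        filter_upwards [hev] with t ht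
        exact abs_of_pos ht
      have hm2 : IsLocalMax V θ := hm.congr heq
      exact hm2.hasDerivAt_eq_zero (hV' θ)
    -- the polynomial ODE
  have hpode : ∀ x : ℝ, (1-x^2) * (Polynomial.derivative (Polynomial.derivative P)).eval x
      = (2*ν+1)*x*(Polynomial.derivative P).eval x - ((n:ℝ)*((n:ℝ)+2*ν))*P.eval x := by
    intro x
    have h := congrArg (Polynomial.eval x) (Pg_ode α n)
    simp only [Polynomial.eval_mul, Polynomial.eval_sub, Polynomial.eval_one,
      Polynomial.eval_pow, Polynomial.eval_X, Polynomial.eval_C] at h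
    rw [hα] at h
    rw [hPdef, hα]
    linear_combination h
  -- the ODE for V
  have hVode : ∀ t : ℝ, Real.sin t^2 * Vdd t + (2*ν-4)*Real.sin t*Real.cos t*Vd t
      + (((n:ℝ)*((n:ℝ)+2*ν)+4*ν-4)*Real.sin t^2 - (4*ν-6))*V t = 0 := by
    intro t
    have hp := hpode (Real.cos t)
    have hs : Real.sin t^2 + Real.cos t^2 = 1 := Real.sin_sq_add_cos_sq t
    have hp2 : Real.sin t^2 * (Polynomial.derivative (Polynomial.derivative P)).eval (Real.cos t)
        = (2*ν+1)*Real.cos t*(Polynomial.derivative P).eval (Real.cos t)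
          - ((n:ℝ)*((n:ℝ)+2*ν))*P.eval (Real.cos t) := by
      linear_combination hp + ((Polynomial.derivative (Polynomial.derivative P)).eval (Real.cos t)) * hs
    simp only [hVdef, hVddef, hVdddef]
    linear_combination (Real.sin t^2)^2 * hp2
      + ((4*ν-6)*Real.sin t^2*(P.eval (Real.cos t)))*hs
  -- Q function
  set Qf : ℝ → ℝ := fun t => ((n:ℝ)*((n:ℝ)+2*ν) + 4*ν - 4) - (4*ν-6)/Real.sin t^2 with hQfdef
  have hVdd_eq : ∀ t : ℝ, Real.sin t ≠ 0 →
      Vdd t = -((2*ν-4)*Real.cos t/Real.sin t)*Vd t - Qf t * V t := by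
    intro t hst
    have h := hVode t
    rw [hQfdef]
    field_simp
    linear_combination h
  -- strict monotonicity of Q
  have hQmono : ∀ a b : ℝ, a ∈ Ioo (0:ℝ) (π/2) → b ∈ Ioo (0:ℝ) (π/2) → a < b →
      Qf a < Qf b := by
    intro a b ha hb hab
    have h1 : Real.sin a < Real.sin b := by
      apply Real.strictMonoOn_sin ⟨by linarith [ha.1], by linarith [ha.2]⟩
        ⟨by linarith [hb.1], by linarith [hb.2]⟩ hab
    have h2 : 0 < Real.sin a := hsinpos a ha
    have h3 : Real.sin a^2 < Real.sin b^2 := by nlinarith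
    have h4 : (4*ν-6)/Real.sin b^2 < (4*ν-6)/Real.sin a^2 := by
      apply div_lt_div_of_pos_left (by linarith) (by positivity) h3
    rw [hQfdef]
    simp only
    linarith
    -- positivity of Q at a local max point
  have hQpos : ∀ θ ∈ Ioo (0:ℝ) (π/2), IsLocalMax (fun t => |V t|) θ → 0 < Qf θ := by
    intro θ hθ hm
    obtain ⟨hVne, hVd0⟩ := key θ hθ hm
    by_contra hQ
    push_neg at hQ
    set S : ℝ := if 0 < V θ then 1 else -1 with hSdef
    have hSone : |S| = 1 := by rw [hSdef]; split <;> simp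
    have hSU : 0 < S * V θ := by
      rcases hVne.lt_or_gt with hlt' | hgt'
      · rw [hSdef, if_neg (by linarith)]; nlinarith
      · rw [hSdef, if_pos hgt']; linarith
    have hUd : ∀ t : ℝ, HasDerivAt (fun u => S * V u) (S * Vd t) t :=
      fun t => (hV' t).const_mul S
    have hUev : ∀ᶠ t in nhds θ, 0 < S * V t :=
      (continuous_const.mul hVcont).continuousAt.eventually_mem (Ioi_mem_nhds hSU)
    have hUmax : IsLocalMax (fun t => S * V t) θ := by
      have heq : (fun t => |V t|) =ᶠ[nhds θ] fun t => S * V t := by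
        filter_upwards [hUev] with t ht
        calc |V t| = |S| * |V t| := by rw [hSone, one_mul]
          _ = |S * V t| := (abs_mul S (V t)).symm
          _ = S * V t := abs_of_pos ht
      exact hm.congr heq
    obtain ⟨δ, hδ0, hδ⟩ := Metric.eventually_nhds_iff.mp hUmax
    obtain ⟨δ', hδ'0, hδ'⟩ := Metric.eventually_nhds_iff.mp hUev
    set a : ℝ := θ - min (min δ δ' / 2) (θ/2) with hadef
    have hmin1 : 0 < min (min δ δ' / 2) (θ/2) := by
      apply lt_min (by positivity) (by linarith [hθ.1])
    have haθ : a < θ := by rw [hadef]; linarith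
    have ha0 : 0 < a := by
      rw [hadef]
      have : min (min δ δ' / 2) (θ/2) ≤ θ/2 := min_le_right _ _
      linarith [hθ.1]
    have haI : Icc a θ ⊆ Ioo (0:ℝ) (π/2) := by
      intro t ht
      exact ⟨by linarith [ht.1], by linarith [ht.2, hθ.2]⟩
    have hadist : ∀ t ∈ Icc a θ, dist t θ < min δ δ' := by
      intro t ht
      rw [Real.dist_eq, abs_sub_lt_iff]
      have h1 : min (min δ δ' / 2) (θ/2) ≤ min δ δ' / 2 := min_le_left _ _
      have h2 : 0 < min δ δ' := lt_min hδ0 hδ'0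
      constructor
      · linarith [ht.2]
      · have := ht.1; rw [hadef] at this; linarith
    set m : ℝ → ℝ := fun t => Real.sin t ^ (2*ν - 4 : ℝ) with hmdef
    have hmpos : ∀ t ∈ Ioo (0:ℝ) (π/2), 0 < m t := fun t ht =>
      Real.rpow_pos_of_pos (hsinpos t ht) _
    set F : ℝ → ℝ := fun t => m t * (S * Vd t) with hFdef
    have hF' : ∀ t ∈ Ioo (0:ℝ) (π/2),
        HasDerivAt F (-(m t * Qf t * (S * V t))) t := by
      intro t ht
      have hst := hsinpos t ht
      have hm' : HasDerivAt m (Real.cos t * (2*ν-4) * Real.sin t ^ (2*ν-4-1:ℝ)) t := by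
        rw [hmdef]
        exact HasDerivAt.rpow_const (Real.hasDerivAt_sin t) (Or.inl hst.ne')
      have hmul := hm'.fun_mul ((hVd' t).const_mul S)
      refine hmul.congr_deriv ?_
      rw [hVdd_eq t hst.ne']
      have hsubm : Real.sin t ^ (2*ν-4-1:ℝ) = Real.sin t ^ (2*ν-4:ℝ) / Real.sin t := by
        rw [Real.rpow_sub hst, Real.rpow_one]
      rw [hmdef]
      simp only
      rw [hsubm]
      field_simp
      ring
    have hmono : StrictMonoOn F (Icc a θ) := by
      apply strictMonoOn_of_deriv_pos (convex_Icc a θ)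
      · intro t ht
        exact (hF' t (haI ht)).continuousAt.continuousWithinAt
      · intro t ht
        rw [interior_Icc] at ht
        rw [(hF' t (haI (Ioo_subset_Icc_self ht))).deriv]
        have htI := haI (Ioo_subset_Icc_self ht)
        have hQt : Qf t < 0 := lt_of_lt_of_le (hQmono t θ htI hθ ht.2) hQ
        have hUt : 0 < S * V t := hδ' (lt_of_lt_of_le (hadist t (Ioo_subset_Icc_self ht))
          (min_le_right _ _))
        have hmt := hmpos t htI
        nlinarith [mul_pos (mul_pos hmt hUt) (neg_pos.mpr hQt)]
    have hFθ : F θ = 0 := by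
      rw [hFdef]; simp only; rw [hVd0]; ring
    have hanti : StrictAntiOn (fun t => S * V t) (Icc a θ) := by
      apply strictAntiOn_of_deriv_neg (convex_Icc a θ)
      · intro t ht
        exact (hUd t).continuousAt.continuousWithinAt
      · intro t ht
        rw [interior_Icc] at ht
        rw [(hUd t).deriv]
        have h1 : F t < F θ := hmono (Ioo_subset_Icc_self ht)
          (right_mem_Icc.mpr haθ.le) ht.2
        rw [hFθ] at h1
        have hmt := hmpos t (haI (Ioo_subset_Icc_self ht))
        rw [hFdef] at h1
        simp only at h1
        nlinarith
    have hfinal : S * V θ < S * V a :=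
      hanti (left_mem_Icc.mpr haθ.le) (right_mem_Icc.mpr haθ.le) haθ
    have hle : S * V a ≤ S * V θ :=
      hδ (lt_of_lt_of_le (hadist a (left_mem_Icc.mpr haθ.le)) (min_le_left _ _))
    linarith
    -- apply the local facts at θ₁ and θ₂
  have hlm1 := hlmV θ₁ ⟨hθ₁0, hθ₁π⟩ hmax₁
  have hlm2 := hlmV θ₂ ⟨hθ₂0, hθ₂π⟩ hmax₂
  obtain ⟨hVne1, hVd1⟩ := key θ₁ ⟨hθ₁0, hθ₁π⟩ hlm1
  obtain ⟨hVne2, hVd2⟩ := key θ₂ ⟨hθ₂0, hθ₂π⟩ hlm2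
  have hQ1 : 0 < Qf θ₁ := hQpos θ₁ ⟨hθ₁0, hθ₁π⟩ hlm1
  have hIccsub : Icc θ₁ θ₂ ⊆ Ioo (0:ℝ) (π/2) := fun t ht =>
    ⟨lt_of_lt_of_le hθ₁0 ht.1, lt_of_le_of_lt ht.2 hθ₂π⟩
  have hQIcc : ∀ t ∈ Icc θ₁ θ₂, 0 < Qf t := by
    intro t ht
    rcases eq_or_lt_of_le ht.1 with heq | hlt'
    · rw [← heq]; exact hQ1
    · exact lt_trans hQ1 (hQmono θ₁ t ⟨hθ₁0, hθ₁π⟩ (hIccsub ht) hlt')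
  -- the energy function
  set E : ℝ → ℝ := fun t => V t^2 + (Vd t)^2 / Qf t with hEdef
  set Qd : ℝ → ℝ := fun t => 2*(4*ν-6)*Real.cos t/Real.sin t^3 with hQddef
  clear_value V Vd Vdd Qf E Qd
  have hQf' : ∀ t ∈ Ioo (0:ℝ) (π/2), HasDerivAt Qf (Qd t) t := by
    intro t ht
    have hst := hsinpos t ht
    have hs2 : HasDerivAt (fun u : ℝ => Real.sin u^2) (2*Real.sin t*Real.cos t) t := by
      simpa [mul_comm, mul_assoc, mul_left_comm] using ((Real.hasDerivAt_sin t).fun_pow 2)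
    have hdiv := (hasDerivAt_const t (4*ν-6)).fun_div hs2 (by positivity)
    have hfin := (hasDerivAt_const t ((n:ℝ)*((n:ℝ)+2*ν) + 4*ν - 4)).fun_sub hdiv
    rw [hQfdef, hQddef]
    refine hfin.congr_deriv ?_
    field_simp
    ring
  have hE' : ∀ t ∈ Icc θ₁ θ₂, HasDerivAt E
      (2*V t*Vd t + ((2*Vd t*Vdd t)*Qf t - (Vd t)^2*Qd t)/(Qf t)^2) t := by
    intro t ht
    have hQt := (hQIcc t ht).ne'
    have ha1 : HasDerivAt (fun u => V u^2) (2*V t*Vd t) t := by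
      simpa [mul_comm, mul_assoc, mul_left_comm] using ((hV' t).fun_pow 2)
    have ha2 : HasDerivAt (fun u => (Vd u)^2) (2*Vd t*Vdd t) t := by
      simpa [mul_comm, mul_assoc, mul_left_comm] using ((hVd' t).fun_pow 2)
    have ha3 := ha2.fun_div (hQf' t (hIccsub ht)) hQt
    rw [hEdef]
    exact ha1.fun_add ha3
  have hderivE : ∀ t ∈ Icc θ₁ θ₂, deriv E t =
      -(2*((2*ν-4)*Real.cos t/Real.sin t)*(Vd t)^2*Qf t + (Vd t)^2*Qd t)/(Qf t)^2 := by
    intro t ht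
    rw [(hE' t ht).deriv]
    have hst := (hsinpos t (hIccsub ht)).ne'
    have hQt := (hQIcc t ht).ne'
    rw [hVdd_eq t hst]
    field_simp
    ring
  have hEanti : AntitoneOn E (Icc θ₁ θ₂) := by
    apply antitoneOn_of_deriv_nonpos (convex_Icc _ _)
    · intro t ht
      exact (hE' t ht).continuousAt.continuousWithinAt
    · intro t ht
      rw [interior_Icc] at ht
      exact (hE' t (Ioo_subset_Icc_self ht)).differentiableAt.differentiableWithinAt
    · intro t ht
      rw [interior_Icc] at ht
      have htI := Ioo_subset_Icc_self ht
      rw [hderivE t htI]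
      have hs := hsinpos t (hIccsub htI)
      have hc := hcospos t (hIccsub htI)
      have hQt := hQIcc t htI
      have hν6 : (0:ℝ) < 4*ν-6 := by linarith
      have hQdt : 0 < Qd t := by rw [hQddef]; positivity
      have hp : 0 ≤ (2*ν-4)*Real.cos t/Real.sin t :=
        div_nonneg (mul_nonneg (by linarith) hc.le) hs.le
      apply div_nonpos_of_nonpos_of_nonneg
      · nlinarith [mul_nonneg (mul_nonneg (mul_nonneg (by norm_num : (0:ℝ) ≤ 2) hp)
          (sq_nonneg (Vd t))) hQt.le, mul_nonneg (sq_nonneg (Vd t)) hQdt.le]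
      · positivity
  have hE1 : E θ₁ = V θ₁^2 := by
    rw [hEdef]; simp only; rw [hVd1]; norm_num
  have hE2 : E θ₂ = V θ₂^2 := by
    rw [hEdef]; simp only; rw [hVd2]; norm_num
  have hVle : V θ₂^2 ≤ V θ₁^2 := by
    rw [← hE1, ← hE2]
    exact hEanti (left_mem_Icc.mpr hlt.le) (right_mem_Icc.mpr hlt.le) hlt.le
  -- strictness
  have hVne' : V θ₂^2 ≠ V θ₁^2 := by
    intro heq2
    have hconst : ∀ t ∈ Icc θ₁ θ₂, E t = E θ₁ := by
      intro t ht
      have ha1 : E t ≤ E θ₁ := hEanti (left_mem_Icc.mpr hlt.le) ht ht.1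
      have ha2 : E θ₂ ≤ E t := hEanti ht (right_mem_Icc.mpr hlt.le) ht.2
      have ha3 : E θ₂ = E θ₁ := by rw [hE1, hE2, heq2]
      linarith
    have hVdzero : ∀ t ∈ Ioo θ₁ θ₂, Vd t = 0 := by
      intro t ht
      have hEev : E =ᶠ[nhds t] fun _ => E θ₁ := by
        filter_upwards [isOpen_Ioo.mem_nhds ht] with u hu
        exact hconst u (Ioo_subset_Icc_self hu)
      have hd0 : deriv E t = 0 := by rw [hEev.deriv_eq]; simp
      rw [hderivE t (Ioo_subset_Icc_self ht)] at hd0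
      have hs := hsinpos t (hIccsub (Ioo_subset_Icc_self ht))
      have hc := hcospos t (hIccsub (Ioo_subset_Icc_self ht))
      have hQt := hQIcc t (Ioo_subset_Icc_self ht)
      have hν6 : (0:ℝ) < 4*ν-6 := by linarith
      have hQdt : 0 < Qd t := by rw [hQddef]; positivity
      have hp : 0 ≤ (2*ν-4)*Real.cos t/Real.sin t :=
        div_nonneg (mul_nonneg (by linarith) hc.le) hs.le
      have hQsq : (Qf t)^2 ≠ 0 := by positivity
      have hA : 2*((2*ν-4)*Real.cos t/Real.sin t)*(Vd t)^2*Qf t + (Vd t)^2*Qd t = 0 := by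
        rcases div_eq_zero_iff.mp hd0 with hz | hz
        · linarith [neg_eq_zero.mp hz]
        · exact absurd hz hQsq
      have hint : (0:ℝ) ≤ 2*((2*ν-4)*Real.cos t/Real.sin t)*(Vd t)^2*Qf t :=
        mul_nonneg (mul_nonneg (mul_nonneg (by norm_num) hp) (sq_nonneg _)) hQt.le
      have h3 : (Vd t)^2 * Qd t ≤ 0 := by linarith
      have h4 : (Vd t)^2 ≤ 0 := by
        by_contra hpos4
        push_neg at hpos4
        nlinarith [mul_pos hpos4 hQdt]
      have hsq : (Vd t)^2 = 0 := le_antisymm h4 (sq_nonneg _)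
      exact pow_eq_zero_iff (by norm_num) |>.mp hsq
    have hVzero : ∀ t ∈ Ioo θ₁ θ₂, V t = 0 := by
      intro t ht
      have hVdd0 : Vdd t = 0 := by
        have hev : Vd =ᶠ[nhds t] fun _ => (0:ℝ) := by
          filter_upwards [isOpen_Ioo.mem_nhds ht] with u hu
          exact hVdzero u hu
        have hd := (hVd' t).deriv
        rw [← hd, hev.deriv_eq]
        simp
      have hode := hVode t
      rw [hVdzero t ht, hVdd0] at hode
      have hs := hsinpos t (hIccsub (Ioo_subset_Icc_self ht))
      have hQt := hQIcc t (Ioo_subset_Icc_self ht)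
      have hcoef : ((n:ℝ)*((n:ℝ)+2*ν)+4*ν-4)*Real.sin t^2 - (4*ν-6)
          = Real.sin t^2 * Qf t := by
        rw [hQfdef]
        field_simp
      rw [hcoef] at hode
      have hne : Real.sin t^2 * Qf t ≠ 0 := by positivity
      have : Real.sin t^2 * Qf t * V t = 0 := by linarith [hode]
      rcases mul_eq_zero.mp this with hz | hz
      · exact absurd hz hne
      · exact hz
    exact hnotzero θ₁ θ₂ hθ₁0.le hlt hθ₂π.le hVzero
  have hVlt : V θ₂^2 < V θ₁^2 := lt_of_le_of_ne hVle hVne'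
  rw [habs θ₂ ⟨hθ₂0, hθ₂π⟩, habs θ₁ ⟨hθ₁0, hθ₁π⟩]
  have hab2 : |V θ₂| < |V θ₁| := by
    nlinarith [abs_nonneg (V θ₁), abs_nonneg (V θ₂), sq_abs (V θ₁), sq_abs (V θ₂)]
  exact mul_lt_mul_of_pos_left hab2 (abs_pos.mpr hKne)
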